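/- Let A = diag(λ, 1/λ) with 0 < λ < 1 and B = (1,1;0,1) in SL(2,ℝ), and let 𝒜 = {A, B}. Then the critical exponent δ_𝒜 = inf{s > 0 : ∑_{n≥1} ∑_{C ∈ 𝒜^n} ‖C‖^{-2s} < ∞} satisfies δ_𝒜 ≥ 1. (Here ‖·‖ is the maximum-entry norm.) -/

import Mathlib

open Matrix

abbrev SL2 := Matrix.SpecialLinearGroup (Fin 2) ℝ

/-- The maximum-entry norm of a 2x2 real matrix. -/
def maxNorm (M : Matrix (Fin 2) (Fin 2) ℝ) : ℝ :=
  max (max |M 0 0| |M 0 1|) (max |M 1 0| |M 1 1|)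

/-- Product of the word `l` under the letter assignment `A`. -/
def wordProd {ι : Type*} (A : ι → SL2) (l : List ι) : SL2 := (l.map A).prod

/- Auxiliary material -/

def myWord (a b : ℕ) : List Bool :=
  List.replicate (a+1) false ++ true :: List.replicate (b+1) false

lemma myWord_ne_nil (a b : ℕ) : myWord a b ≠ [] := by simp [myWord]

lemma myWord_succ (a b : ℕ) : myWord (a+1) b = false :: myWord a b := by
  simp [myWord, List.replicate_succ]

lemma myWord_inj_aux : ∀ a a' b b', myWord a b = myWord a' b' → a = a' ∧ b = b' := by
  intro a
  induction a with
  | zero =>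
    intro a' b b' h
    cases a' with
    | zero =>
      have := congrArg List.length h
      simp [myWord] at this
      exact ⟨rfl, by omega⟩
    | succ a' =>
      rw [myWord_succ] at h
      simp [myWord, List.replicate_succ] at h
  | succ a ih =>
    intro a' b b' h
    cases a' with
    | zero =>
      rw [myWord_succ] at h
      simp [myWord, List.replicate_succ] at h
    | succ a' =>
      rw [myWord_succ, myWord_succ] at h
      simp only [List.cons.injEq, true_and] at h
      obtain ⟨h1, h2⟩ := ih a' b b' h
      exact ⟨by omega, h2⟩

lemma wordProd_append (f : Bool → SL2) (l1 l2 : List Bool) :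
    wordProd f (l1 ++ l2) = wordProd f l1 * wordProd f l2 := by
  simp [wordProd]

lemma wordProd_replicate_false (f : Bool → SL2)
    (hB : ((f false : SL2) : Matrix (Fin 2) (Fin 2) ℝ) = !![1,1;0,1]) (m : ℕ) :
    ((wordProd f (List.replicate m false) : SL2) : Matrix (Fin 2) (Fin 2) ℝ)
      = !![1, (m:ℝ); 0, 1] := by
  induction m with
  | zero => simp [wordProd, Matrix.SpecialLinearGroup.coe_one, Matrix.one_fin_two]
  | succ m ih =>
    rw [List.replicate_succ,
      show wordProd f (false :: List.replicate m false)
        = f false * wordProd f (List.replicate m false) by simp [wordProd],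
      Matrix.SpecialLinearGroup.coe_mul, hB, ih, Matrix.mul_fin_two]
    push_cast
    norm_num

lemma myWord_matrix (lam : ℝ) (f : Bool → SL2)
    (hA : ((f true : SL2) : Matrix (Fin 2) (Fin 2) ℝ) = !![lam, 0; 0, lam⁻¹])
    (hB : ((f false : SL2) : Matrix (Fin 2) (Fin 2) ℝ) = !![1,1;0,1]) (a b : ℕ) :
    ((wordProd f (myWord a b) : SL2) : Matrix (Fin 2) (Fin 2) ℝ)
      = !![lam, lam*(b+1) + (a+1)*lam⁻¹; 0, lam⁻¹] := by
  have h : myWord a b = List.replicate (a+1) false ++ [true] ++ List.replicate (b+1) false := by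
    simp [myWord]
  rw [h, wordProd_append, wordProd_append, Matrix.SpecialLinearGroup.coe_mul,
    Matrix.SpecialLinearGroup.coe_mul, wordProd_replicate_false f hB,
    wordProd_replicate_false f hB,
    show wordProd f [true] = f true by simp [wordProd], hA,
    Matrix.mul_fin_two, Matrix.mul_fin_two]
  push_cast
  ring_nf

set_option maxHeartbeats 1000000 in
/-- For `𝒜 = {A, B}` with `A = diag(λ, 1/λ)`, `0 < λ < 1`, and `B = (1,1;0,1)`, the
critical exponent satisfies `δ_𝒜 ≥ 1`: for every `0 < s < 1` the zeta series
`∑_{n≥1} ∑_{C ∈ 𝒜ⁿ} ‖C‖^{-2s}` (over words, maximum-entry norm) diverges. -/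
theorem stmt3 (lam : ℝ) (hl0 : 0 < lam) (hl1 : lam < 1) (A B : SL2)
    (hA : (A : Matrix (Fin 2) (Fin 2) ℝ) = !![lam, 0; 0, lam⁻¹])
    (hB : (B : Matrix (Fin 2) (Fin 2) ℝ) = !![1, 1; 0, 1]) :
    ∀ s : ℝ, 0 < s → s < 1 →
      ¬ Summable (fun l : {l : List Bool // l ≠ []} =>
        maxNorm ((wordProd (fun i : Bool => if i then A else B) l.1 : SL2) :
          Matrix (Fin 2) (Fin 2) ℝ) ^ (-2 * s)) := by
  intro s hs0 hs1 hsum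
  set f : Bool → SL2 := fun i : Bool => if i then A else B with hf
  have hfA : ((f true : SL2) : Matrix (Fin 2) (Fin 2) ℝ) = !![lam, 0; 0, lam⁻¹] := by
    simp [hf, hA]
  have hfB : ((f false : SL2) : Matrix (Fin 2) (Fin 2) ℝ) = !![1,1;0,1] := by
    simp [hf, hB]
  have hil : 0 < lam⁻¹ := inv_pos.mpr hl0
  have hmul : lam * lam⁻¹ = 1 := mul_inv_cancel₀ hl0.ne'
  have hli : lam ≤ lam⁻¹ := by nlinarith
  -- restrict to the subfamily of words B^{a+1} A B^{b+1}
  have hinj : Function.Injective (fun p : ℕ × ℕ =>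
      (⟨myWord p.1 p.2, myWord_ne_nil p.1 p.2⟩ : {l : List Bool // l ≠ []})) := by
    intro ⟨a, b⟩ ⟨a', b'⟩ h
    obtain ⟨h1, h2⟩ := myWord_inj_aux a a' b b' (by simpa using h)
    simp [h1, h2]
  have hF : Summable (fun p : ℕ × ℕ =>
      maxNorm ((wordProd f (myWord p.1 p.2) : SL2) : Matrix (Fin 2) (Fin 2) ℝ) ^ (-2*s)) := by
    have := hsum.comp_injective hinj
    simpa [Function.comp_def] using this
  -- lower bound by an explicit function
  set G : ℕ × ℕ → ℝ := fun p => lam ^ (2*s) * ((p.1:ℝ) + p.2 + 2) ^ (-2*s) with hGdef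
  have hNpos : ∀ a b : ℕ, (0:ℝ) < (a:ℝ) + b + 2 := by intro a b; positivity
  have hGnonneg : ∀ p : ℕ × ℕ, 0 ≤ G p := by
    intro p
    have := hNpos p.1 p.2
    positivity
  have hinvrpow : lam⁻¹ ^ (-2*s) = lam ^ (2*s) := by
    rw [Real.inv_rpow hl0.le, show (-2*s : ℝ) = -(2*s) by ring, Real.rpow_neg hl0.le, inv_inv]
  have hGle : ∀ p : ℕ × ℕ, G p ≤
      maxNorm ((wordProd f (myWord p.1 p.2) : SL2) : Matrix (Fin 2) (Fin 2) ℝ) ^ (-2*s) := by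
    rintro ⟨a, b⟩
    rw [myWord_matrix lam f hfA hfB a b]
    set N : ℝ := (a:ℝ) + b + 2 with hN
    have hN2 : (2:ℝ) ≤ N := by simp [hN]; positivity
    have hNpos' : (0:ℝ) < N := by linarith
    have hx : (0:ℝ) < lam * (b+1) + (a+1) * lam⁻¹ := by positivity
    have hnorm_le : maxNorm !![lam, lam*(b+1) + (a+1)*lam⁻¹; 0, lam⁻¹] ≤ lam⁻¹ * N := by
      unfold maxNorm
      have e00 : |(!![lam, lam*(b+1) + (a+1)*lam⁻¹; 0, lam⁻¹] : Matrix (Fin 2) (Fin 2) ℝ) 0 0| = lam := by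
        simp [abs_of_pos hl0]
      have e01 : |(!![lam, lam*(b+1) + (a+1)*lam⁻¹; 0, lam⁻¹] : Matrix (Fin 2) (Fin 2) ℝ) 0 1|
          = lam*(b+1) + (a+1)*lam⁻¹ := by
        simp [abs_of_pos hx]
      have e10 : |(!![lam, lam*(b+1) + (a+1)*lam⁻¹; 0, lam⁻¹] : Matrix (Fin 2) (Fin 2) ℝ) 1 0| = 0 := by
        simp
      have e11 : |(!![lam, lam*(b+1) + (a+1)*lam⁻¹; 0, lam⁻¹] : Matrix (Fin 2) (Fin 2) ℝ) 1 1| = lam⁻¹ := by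
        simp [abs_of_pos hil]
      rw [e00, e01, e10, e11]
      have hb0 : (0:ℝ) ≤ (b:ℝ) := Nat.cast_nonneg b
      have ha0 : (0:ℝ) ≤ (a:ℝ) := Nat.cast_nonneg a
      have hb1 : (1:ℝ) ≤ (b:ℝ) + 1 := by linarith
      have ha1 : (1:ℝ) ≤ (a:ℝ) + 1 := by linarith
      apply max_le (max_le ?_ ?_) (max_le ?_ ?_)
      · nlinarith
      · have h1 : lam * ((b:ℝ)+1) ≤ lam⁻¹ * ((b:ℝ)+1) := by nlinarith
        have h2 : ((a:ℝ)+1) * lam⁻¹ ≤ lam⁻¹ * ((a:ℝ)+1) := le_of_eq (by ring)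
        have : lam⁻¹ * ((b:ℝ)+1) + lam⁻¹ * ((a:ℝ)+1) = lam⁻¹ * N := by rw [hN]; ring
        linarith
      · positivity
      · nlinarith
    have hnorm_pos : 0 < maxNorm !![lam, lam*(b+1) + (a+1)*lam⁻¹; 0, lam⁻¹] := by
      unfold maxNorm
      have : lam⁻¹ ≤ max |(!![lam, lam*(b+1) + (a+1)*lam⁻¹; 0, lam⁻¹] : Matrix (Fin 2) (Fin 2) ℝ) 1 0|
          |(!![lam, lam*(b+1) + (a+1)*lam⁻¹; 0, lam⁻¹] : Matrix (Fin 2) (Fin 2) ℝ) 1 1| := by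
        refine le_trans ?_ (le_max_right _ _)
        simp [abs_of_pos hil]
      exact lt_of_lt_of_le hil (le_trans this (le_max_right _ _))
    calc G (a, b) = (lam⁻¹ * N) ^ (-2*s) := by
          rw [hGdef]
          rw [Real.mul_rpow hil.le hNpos'.le, hinvrpow]
      _ ≤ _ := Real.rpow_le_rpow_of_nonpos hnorm_pos hnorm_le (by nlinarith)
  have hG : Summable G := Summable.of_nonneg_of_le hGnonneg hGle hF
  have hfib := (summable_prod_of_nonneg hGnonneg).mp hG
  set K : ℝ := lam ^ (2*s) * 2 ^ (-2*s) with hK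
  have hKpos : 0 < K := by
    rw [hK]
    positivity
  have hLle : ∀ a : ℕ, K / 2 * ((a:ℝ)+2) ^ (1-2*s) ≤ ∑' b, G (a, b) := by
    intro a
    have hfa : Summable fun b => G (a, b) := hG.prod_factor a
    have hsumle : ∑ b ∈ Finset.range (a+1), G (a, b) ≤ ∑' b, G (a, b) :=
      Summable.sum_le_tsum _ (fun b _ => hGnonneg (a, b)) hfa
    have ha2 : (0:ℝ) < (a:ℝ) + 2 := by positivity
    have hterm : ∀ b ∈ Finset.range (a+1), K * ((a:ℝ)+2) ^ (-2*s) ≤ G (a, b) := by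
      intro b hb
      have hba : (b:ℝ) ≤ a := by
        have := Finset.mem_range.mp hb
        exact_mod_cast Nat.lt_succ_iff.mp this
      have h1 : (a:ℝ) + b + 2 ≤ 2 * ((a:ℝ)+2) := by linarith
      have h2 : ((a:ℝ) + b + 2) ^ (-2*s) ≥ (2 * ((a:ℝ)+2)) ^ (-2*s) :=
        Real.rpow_le_rpow_of_nonpos (hNpos a b) h1 (by nlinarith)
      have h3 : (2 * ((a:ℝ)+2)) ^ (-2*s) = 2 ^ (-2*s) * ((a:ℝ)+2) ^ (-2*s) :=
        Real.mul_rpow (by norm_num) ha2.le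
      rw [hGdef]
      simp only
      rw [hK, mul_assoc]
      have hl2s : (0:ℝ) < lam ^ (2*s) := Real.rpow_pos_of_pos hl0 _
      nlinarith [h2, h3, Real.rpow_pos_of_pos ha2 (-2*s)]
    have hsumge : ((a:ℝ)+1) * (K * ((a:ℝ)+2) ^ (-2*s)) ≤ ∑ b ∈ Finset.range (a+1), G (a, b) := by
      calc ((a:ℝ)+1) * (K * ((a:ℝ)+2) ^ (-2*s))
          = ∑ _b ∈ Finset.range (a+1), K * ((a:ℝ)+2) ^ (-2*s) := by
            rw [Finset.sum_const, Finset.card_range]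
            simp only [nsmul_eq_mul]
            push_cast
            ring
        _ ≤ _ := Finset.sum_le_sum hterm
    have hrw : ((a:ℝ)+2) ^ (1-2*s) = ((a:ℝ)+2) * ((a:ℝ)+2) ^ (-2*s) := by
      rw [show (1-2*s : ℝ) = 1 + (-2*s) by ring, Real.rpow_add ha2, Real.rpow_one]
    have hp : 0 < ((a:ℝ)+2) ^ (-2*s) := Real.rpow_pos_of_pos ha2 _
    have : K / 2 * ((a:ℝ)+2) ^ (1-2*s) ≤ ((a:ℝ)+1) * (K * ((a:ℝ)+2) ^ (-2*s)) := by
      rw [hrw]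
      nlinarith [mul_nonneg (mul_nonneg hKpos.le hp.le) (Nat.cast_nonneg a : (0:ℝ) ≤ a),
        mul_pos hKpos hp]
    linarith
  have hL : Summable (fun a : ℕ => K / 2 * ((a:ℝ)+2) ^ (1-2*s)) :=
    Summable.of_nonneg_of_le
      (fun a => by positivity)
      hLle hfib.2
  have hL2 : Summable (fun a : ℕ => ((a:ℝ)+2) ^ (1-2*s)) := by
    have hK2 : (K/2) ≠ 0 := by positivity
    refine (hL.mul_left (K/2)⁻¹).congr fun a => ?_
    rw [inv_mul_cancel_left₀ hK2]
  have hL3 : Summable (fun n : ℕ => ((n:ℝ)) ^ (1-2*s)) := by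
    refine (summable_nat_add_iff 2).mp (hL2.congr fun n => ?_)
    push_cast
    ring_nf
  have := Real.summable_nat_rpow.mp hL3
  linarith
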